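/- Let p ≡ 1 (mod 5) be prime and let ψ be a multiplicative character of F_p of order 5. If a, b, c ∈ ℤ are such that a + c ≢ 0 (mod 5) and b + c ≢ 0 (mod 5), then Σ_{χ} χ(−1)·J(χ^{−1}ψ^a, χ^{−1}ψ^b, χψ^c) = −(p−1), where the sum runs over all multiplicative characters χ of F_p, and the equality holds in ℂ. -/

import Mathlib

open Finset

/-- The generalized Jacobi sum of order 3:
`J(χ₁, χ₂, χ₃) = Σ_{t₁+t₂+t₃=1} χ₁(t₁) χ₂(t₂) χ₃(t₃)`. -/
noncomputable def jacobiSum₃ {p : ℕ} [NeZero p] (χ₁ χ₂ χ₃ : MulChar (ZMod p) ℂ) : ℂ :=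
  ∑ t₁ : ZMod p, ∑ t₂ : ZMod p, χ₁ t₁ * χ₂ t₂ * χ₃ (1 - t₁ - t₂)

/-- Orthogonality with an arbitrary `Fintype` instance. -/
lemma sum_chars_aux (p : ℕ) [Fact p.Prime] [inst : Fintype (MulChar (ZMod p) ℂ)]
    (x : ZMod p) :
    ∑ χ : MulChar (ZMod p) ℂ, χ x = if x = 1 then ((p : ℂ) - 1) else 0 := by
  rw [Subsingleton.elim inst (DirichletCharacter.fintype (R := ℂ) (n := p))]
  rw [DirichletCharacter.sum_characters_eq ℂ x, Nat.totient_prime Fact.out]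
  split_ifs
  · have h1 : 1 ≤ p := (Fact.out : p.Prime).one_lt.le
    push_cast [Nat.cast_sub h1]
    ring
  · rfl

lemma zpow_apply_neg_one (p : ℕ) [Fact p.Prime] (ψ : MulChar (ZMod p) ℂ)
    (h : ψ (-1) = 1) (c : ℤ) : (ψ ^ c) (-1) = 1 := by
  have hu : IsUnit (-1 : ZMod p) := (isUnit_one (M := ZMod p)).neg
  have hn : ∀ n : ℕ, (ψ ^ n) (-1) = 1 := by
    intro n
    rcases Nat.eq_zero_or_pos n with h0 | h0
    · simp [h0, MulChar.one_apply hu]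
    · rw [MulChar.pow_apply' _ h0.ne', h, one_pow]
  obtain ⟨n, rfl | rfl⟩ := Int.eq_nat_or_neg c
  · rw [zpow_natCast]; exact hn n
  · rw [zpow_neg, zpow_natCast, MulChar.inv_apply', inv_neg_one]
    exact hn n

lemma mulchar_neg_one_eq_one (p : ℕ) [Fact p.Prime] (ψ : MulChar (ZMod p) ℂ)
    (hψ : orderOf ψ = 5) : ψ (-1) = 1 := by
  have hu : IsUnit (-1 : ZMod p) := (isUnit_one (M := ZMod p)).neg
  have hx2 : ψ (-1) ^ 2 = 1 := by
    rw [← map_pow, neg_one_sq, map_one]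
  have hx5 : ψ (-1) ^ 5 = 1 := by
    rw [← MulChar.pow_apply' ψ (by norm_num : (5:ℕ) ≠ 0), ← hψ, pow_orderOf_eq_one,
      MulChar.one_apply hu]
  have : ψ (-1) * (ψ (-1) ^ 2) ^ 2 = ψ (-1) ^ 5 := by ring
  rw [hx2, hx5] at this
  simpa using this

/-- For a prime `p ≡ 1 (mod 5)`, a character `ψ` of order 5 and integers `a, b, c` with
`a + c ≢ 0` and `b + c ≢ 0 (mod 5)`, one has
`Σ_χ χ(-1) J(χ⁻¹ψ^a, χ⁻¹ψ^b, χψ^c) = -(p-1)`. -/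
theorem sum_jacobiSum₃_eq (p : ℕ) [Fact p.Prime] (hp : p % 5 = 1)
    [Fintype (MulChar (ZMod p) ℂ)]
    (ψ : MulChar (ZMod p) ℂ) (hψ : orderOf ψ = 5)
    (a b c : ℤ) (hac : ¬ (5 : ℤ) ∣ (a + c)) (hbc : ¬ (5 : ℤ) ∣ (b + c)) :
    ∑ χ : MulChar (ZMod p) ℂ,
        χ (-1) * jacobiSum₃ (χ⁻¹ * ψ ^ a) (χ⁻¹ * ψ ^ b) (χ * ψ ^ c) =
      -((p : ℂ) - 1) := by
  have hm1 : ψ (-1) = 1 := mulchar_neg_one_eq_one p ψ hψ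
  have hz : ∀ d : ℤ, (ψ ^ d) (-1) = 1 := zpow_apply_neg_one p ψ hm1
  -- nontriviality of ψ^(a+c) and ψ^(b+c)
  have hnt : ∀ d : ℤ, ¬ (5:ℤ) ∣ d → ψ ^ d ≠ 1 := by
    intro d hd h1
    have h2 := orderOf_dvd_iff_zpow_eq_one.mpr h1
    rw [hψ] at h2
    exact hd (by exact_mod_cast h2)
  -- key per-term identity
  have hterm : ∀ (χ : MulChar (ZMod p) ℂ) (t1 t2 : ZMod p),
      χ (-1) * ((χ⁻¹ * ψ ^ a) t1 * (χ⁻¹ * ψ ^ b) t2 * ((χ * ψ ^ c) (1 - t1 - t2))) =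
      (ψ ^ a) t1 * (ψ ^ b) t2 * (ψ ^ c) (1 - t1 - t2) *
        χ (-(t1⁻¹ * t2⁻¹ * (1 - t1 - t2))) := by
    intro χ t1 t2
    rw [show (-(t1⁻¹ * t2⁻¹ * (1 - t1 - t2)) : ZMod p)
        = -1 * t1⁻¹ * (t2⁻¹ * (1 - t1 - t2)) by ring, map_mul, map_mul, map_mul]
    simp only [MulChar.mul_apply, MulChar.inv_apply']
    ring
  calc
    ∑ χ : MulChar (ZMod p) ℂ,
        χ (-1) * jacobiSum₃ (χ⁻¹ * ψ ^ a) (χ⁻¹ * ψ ^ b) (χ * ψ ^ c)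
      = ∑ t1 : ZMod p, ∑ t2 : ZMod p, ∑ χ : MulChar (ZMod p) ℂ,
          χ (-1) * ((χ⁻¹ * ψ ^ a) t1 * (χ⁻¹ * ψ ^ b) t2 * ((χ * ψ ^ c) (1 - t1 - t2))) := by
        simp only [jacobiSum₃, Finset.mul_sum]
        rw [Finset.sum_comm]
        exact Finset.sum_congr rfl fun t1 _ => Finset.sum_comm
    _ = ∑ t1 : ZMod p, ∑ t2 : ZMod p,
          (ψ ^ a) t1 * (ψ ^ b) t2 * (ψ ^ c) (1 - t1 - t2) *
          (if -(t1⁻¹ * t2⁻¹ * (1 - t1 - t2)) = 1 then ((p : ℂ) - 1) else 0) := by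
        refine Finset.sum_congr rfl fun t1 _ => Finset.sum_congr rfl fun t2 _ => ?_
        simp only [hterm]
        rw [← Finset.mul_sum, sum_chars_aux]
    _ = -((p : ℂ) - 1) := by
        -- evaluate the double sum
        have hrow1 : ∑ t2 : ZMod p,
            (ψ ^ a) (1:ZMod p) * (ψ ^ b) t2 * (ψ ^ c) (1 - 1 - t2) *
            (if -((1:ZMod p)⁻¹ * t2⁻¹ * (1 - 1 - t2)) = 1 then ((p : ℂ) - 1) else 0)
            = 0 := by
          have : ∀ t2 : ZMod p,
              (ψ ^ a) (1:ZMod p) * (ψ ^ b) t2 * (ψ ^ c) (1 - 1 - t2) *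
              (if -((1:ZMod p)⁻¹ * t2⁻¹ * (1 - 1 - t2)) = 1 then ((p : ℂ) - 1) else 0)
              = (ψ ^ (b + c)) t2 * ((p : ℂ) - 1) := by
            intro t2
            rcases eq_or_ne t2 0 with rfl | h2
            · rw [MulChar.map_nonunit (ψ ^ b) (by simp),
                MulChar.map_nonunit (ψ ^ (b + c)) (by simp)]
              ring
            · have hc : -((1:ZMod p)⁻¹ * t2⁻¹ * (1 - 1 - t2)) = 1 := by
                field_simp
                ring
              rw [if_pos hc, map_one]
              have h12 : (1 - 1 - t2 : ZMod p) = -1 * t2 := by ring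
              rw [h12, map_mul, hz c, zpow_add, MulChar.mul_apply]
              ring
          rw [Finset.sum_congr rfl fun t2 _ => this t2, ← Finset.sum_mul,
            MulChar.sum_eq_zero_of_ne_one (hnt _ hbc), zero_mul]
        have hrow : ∀ t1 : ZMod p, t1 ≠ 1 → ∑ t2 : ZMod p,
            (ψ ^ a) t1 * (ψ ^ b) t2 * (ψ ^ c) (1 - t1 - t2) *
            (if -(t1⁻¹ * t2⁻¹ * (1 - t1 - t2)) = 1 then ((p : ℂ) - 1) else 0)
            = ((p : ℂ) - 1) * (ψ ^ (a + c)) t1 := by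
          intro t1 ht1
          rw [Finset.sum_eq_single (1 : ZMod p)]
          · rcases eq_or_ne t1 0 with rfl | h1
            · rw [MulChar.map_nonunit (ψ ^ a) (by simp),
                MulChar.map_nonunit (ψ ^ (a + c)) (by simp)]
              ring
            · have hc : -(t1⁻¹ * (1:ZMod p)⁻¹ * (1 - t1 - 1)) = 1 := by
                field_simp
                ring
              rw [if_pos hc, map_one]
              have h12 : (1 - t1 - 1 : ZMod p) = -1 * t1 := by ring
              rw [h12, map_mul, hz c, zpow_add, MulChar.mul_apply]
              ring
          · intro t2 _ ht2
            have hcond : ¬(-(t1⁻¹ * t2⁻¹ * (1 - t1 - t2)) = 1) := by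
              intro h
              rcases eq_or_ne t1 0 with rfl | h1
              · simp at h
              rcases eq_or_ne t2 0 with rfl | h2
              · simp at h
              have h' : -(t1⁻¹ * t2⁻¹ * (1 - t1 - t2)) * (t1 * t2) = 1 * (t1 * t2) := by
                rw [h]
              rw [one_mul] at h'
              have h'' : -(1 - t1 - t2) = t1 * t2 := by
                field_simp at h'
                linear_combination h'
              have h0 : (t1 - 1) * (t2 - 1) = 0 := by linear_combination -h''
              rcases mul_eq_zero.mp h0 with h3 | h3
              · exact ht1 (by linear_combination h3)
              · exact ht2 (by linear_combination h3)
            rw [if_neg hcond, mul_zero]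
          · intro h
            exact absurd (Finset.mem_univ _) h
        have step : ∀ t1 : ZMod p, (∑ t2 : ZMod p,
            (ψ ^ a) t1 * (ψ ^ b) t2 * (ψ ^ c) (1 - t1 - t2) *
            (if -(t1⁻¹ * t2⁻¹ * (1 - t1 - t2)) = 1 then ((p : ℂ) - 1) else 0))
            = (if t1 = 1 then 0 else ((p : ℂ) - 1) * (ψ ^ (a + c)) t1) := by
          intro t1
          split_ifs with h
          · subst h; exact hrow1
          · exact hrow t1 h
        rw [Finset.sum_congr rfl fun t1 _ => step t1]
        have hsplit : ∀ t1 : ZMod p,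
            (if t1 = 1 then 0 else ((p : ℂ) - 1) * (ψ ^ (a + c)) t1)
            = ((p : ℂ) - 1) * (ψ ^ (a + c)) t1
              - (if t1 = 1 then ((p : ℂ) - 1) * (ψ ^ (a + c)) t1 else 0) := by
          intro t1; split_ifs <;> simp
        simp only [hsplit]
        rw [Finset.sum_sub_distrib, Finset.sum_ite_eq' Finset.univ (1 : ZMod p), ← Finset.mul_sum,
          MulChar.sum_eq_zero_of_ne_one (hnt _ hac), mul_zero]
        simp
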